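/- arXiv:2110.12849 — 10 statements merged into one kernel-verified Lean document; each statement's English description precedes it below -/
import Mathlib

section
/- Let A be a commutative (not necessarily associative) algebra over ℂ. For x ∈ A let L_x : A → A denote the multiplication operator L_x(z) = x·z. Then the commutator [L_x, L_y] = L_x ∘ L_y − L_y ∘ L_x is a derivation of A for all x, y ∈ A if and only if A satisfies the almost-Jordan identity 2·(((y·x)·x)·x) + y·((x·x)·x) = 3·((y·(x·x))·x) for all x, y ∈ A. (That is, a commutative algebra over ℂ is a CD-algebra if and only if it is an almost-Jordan algebra.) -/
set_option maxHeartbeats 1600000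


/-- A commutative (not necessarily associative) algebra over ℂ is a CD-algebra
(the commutator `[L_x, L_y]` of any pair of multiplication operators is a derivation)
if and only if it satisfies the almost-Jordan identity
`2·(((y·x)·x)·x) + y·((x·x)·x) = 3·((y·(x·x))·x)`. -/
theorem commutator_of_mul_ops_is_derivation_iff_almost_jordan
    {V : Type*} [AddCommGroup V] [Module ℂ V]
    (m : V →ₗ[ℂ] V →ₗ[ℂ] V) (hcomm : ∀ x y : V, m x y = m y x) :
    (∀ x y a b : V,
        m x (m y (m a b)) - m y (m x (m a b)) =
          m (m x (m y a) - m y (m x a)) b + m a (m x (m y b) - m y (m x b))) ↔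
      (∀ x y : V,
        (2 : ℂ) • m (m (m y x) x) x + m y (m (m x x) x) =
          (3 : ℂ) • m (m y (m x x)) x) := by
  constructor
  · intro h x y
    have h1 := h x y x x
    simp only [map_sub, LinearMap.sub_apply] at h1
    have e0 : m x (m x (m y x)) = m x (m x (m x y)) := (congrArg₂ (fun p q => m p q) rfl (congrArg₂ (fun p q => m p q) rfl (hcomm y x)))
    have e1 : m y (m (m x x) x) = m y (m x (m x x)) := (congrArg₂ (fun p q => m p q) rfl (hcomm (m x x) x))
    have e2 : m (m x (m y x)) x = m x (m x (m x y)) := ((congrArg₂ (fun p q => m p q) (congrArg₂ (fun p q => m p q) rfl (hcomm y x)) rfl).trans (hcomm (m x (m x y)) x))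
    have e3 : m (m y (m x x)) x = m x (m y (m x x)) := (hcomm (m y (m x x)) x)
    have e4 : m (m (m y x) x) x = m x (m x (m x y)) := ((congrArg₂ (fun p q => m p q) ((congrArg₂ (fun p q => m p q) (hcomm y x) rfl).trans (hcomm (m x y) x)) rfl).trans (hcomm (m x (m x y)) x))
    linear_combination (norm := module) (-1 : ℂ) • h1 + (-1 : ℂ) • e0 + (1 : ℂ) • e1 + (-1 : ℂ) • e2 + (-2 : ℂ) • e3 + (2 : ℂ) • e4
  · intro h
    have lin3 : ∀ y a b c : V, ((2:ℂ) • (m (m (m y a) b) c + m (m (m y a) c) b + m (m (m y b) a) c + m (m (m y b) c) a + m (m (m y c) a) b + m (m (m y c) b) a) + (m y (m (m a b) c) + m y (m (m a c) b) + m y (m (m b a) c) + m y (m (m b c) a) + m y (m (m c a) b) + m y (m (m c b) a)) = (3:ℂ) • (m (m y (m a b)) c + m (m y (m a c)) b + m (m y (m b a)) c + m (m y (m b c)) a + m (m y (m c a)) b + m (m y (m c b)) a)) := by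
      intro y a b c
      have h1 := h (a + b + c) y
      have h2 := h (a + b) y
      have h3 := h (a + c) y
      have h4 := h (b + c) y
      have h5 := h a y
      have h6 := h b y
      have h7 := h c y
      simp only [map_add, LinearMap.add_apply] at h1 h2 h3 h4
      linear_combination (norm := module) h1 - h2 - h3 - h4 + h5 + h6 + h7
    intro x y a b
    simp only [map_sub, LinearMap.sub_apply]
    have f0 : m x (m (m y a) b) = m x (m b (m y a)) := (congrArg₂ (fun p q => m p q) rfl (hcomm (m y a) b))
    have f1 : m x (m (m y b) a) = m x (m a (m y b)) := (congrArg₂ (fun p q => m p q) rfl (hcomm (m y b) a))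
    have f2 : m x (m (m a y) b) = m x (m b (m y a)) := (congrArg₂ (fun p q => m p q) rfl ((congrArg₂ (fun p q => m p q) (hcomm a y) rfl).trans (hcomm (m y a) b)))
    have f3 : m x (m (m a b) y) = m x (m y (m a b)) := (congrArg₂ (fun p q => m p q) rfl (hcomm (m a b) y))
    have f4 : m x (m (m b y) a) = m x (m a (m y b)) := (congrArg₂ (fun p q => m p q) rfl ((congrArg₂ (fun p q => m p q) (hcomm b y) rfl).trans (hcomm (m y b) a)))
    have f5 : m x (m (m b a) y) = m x (m y (m a b)) := (congrArg₂ (fun p q => m p q) rfl ((congrArg₂ (fun p q => m p q) (hcomm b a) rfl).trans (hcomm (m a b) y)))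
    have f6 : m y (m (m x a) b) = m y (m b (m x a)) := (congrArg₂ (fun p q => m p q) rfl (hcomm (m x a) b))
    have f7 : m y (m (m x b) a) = m y (m a (m x b)) := (congrArg₂ (fun p q => m p q) rfl (hcomm (m x b) a))
    have f8 : m y (m (m a x) b) = m y (m b (m x a)) := (congrArg₂ (fun p q => m p q) rfl ((congrArg₂ (fun p q => m p q) (hcomm a x) rfl).trans (hcomm (m x a) b)))
    have f9 : m y (m (m a b) x) = m y (m x (m a b)) := (congrArg₂ (fun p q => m p q) rfl (hcomm (m a b) x))
    have f10 : m y (m (m b x) a) = m y (m a (m x b)) := (congrArg₂ (fun p q => m p q) rfl ((congrArg₂ (fun p q => m p q) (hcomm b x) rfl).trans (hcomm (m x b) a)))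
    have f11 : m y (m (m b a) x) = m y (m x (m a b)) := (congrArg₂ (fun p q => m p q) rfl ((congrArg₂ (fun p q => m p q) (hcomm b a) rfl).trans (hcomm (m a b) x)))
    have f12 : m (m x (m y a)) b = m b (m x (m y a)) := (hcomm (m x (m y a)) b)
    have f13 : m (m x (m y b)) a = m a (m x (m y b)) := (hcomm (m x (m y b)) a)
    have f14 : m (m x (m a y)) b = m b (m x (m y a)) := ((congrArg₂ (fun p q => m p q) (congrArg₂ (fun p q => m p q) rfl (hcomm a y)) rfl).trans (hcomm (m x (m y a)) b))
    have f15 : m (m x (m a b)) y = m y (m x (m a b)) := (hcomm (m x (m a b)) y)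
    have f16 : m (m x (m b y)) a = m a (m x (m y b)) := ((congrArg₂ (fun p q => m p q) (congrArg₂ (fun p q => m p q) rfl (hcomm b y)) rfl).trans (hcomm (m x (m y b)) a))
    have f17 : m (m x (m b a)) y = m y (m x (m a b)) := ((congrArg₂ (fun p q => m p q) (congrArg₂ (fun p q => m p q) rfl (hcomm b a)) rfl).trans (hcomm (m x (m a b)) y))
    have f18 : m (m y (m x a)) b = m b (m y (m x a)) := (hcomm (m y (m x a)) b)
    have f19 : m (m y (m x b)) a = m a (m y (m x b)) := (hcomm (m y (m x b)) a)
    have f20 : m (m y (m a x)) b = m b (m y (m x a)) := ((congrArg₂ (fun p q => m p q) (congrArg₂ (fun p q => m p q) rfl (hcomm a x)) rfl).trans (hcomm (m y (m x a)) b))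
    have f21 : m (m y (m a b)) x = m x (m y (m a b)) := (hcomm (m y (m a b)) x)
    have f22 : m (m y (m b x)) a = m a (m y (m x b)) := ((congrArg₂ (fun p q => m p q) (congrArg₂ (fun p q => m p q) rfl (hcomm b x)) rfl).trans (hcomm (m y (m x b)) a))
    have f23 : m (m y (m b a)) x = m x (m y (m a b)) := ((congrArg₂ (fun p q => m p q) (congrArg₂ (fun p q => m p q) rfl (hcomm b a)) rfl).trans (hcomm (m y (m a b)) x))
    have f24 : m (m (m x y) a) b = m b (m a (m x y)) := ((congrArg₂ (fun p q => m p q) (hcomm (m x y) a) rfl).trans (hcomm (m a (m x y)) b))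
    have f25 : m (m (m x y) b) a = m a (m b (m x y)) := ((congrArg₂ (fun p q => m p q) (hcomm (m x y) b) rfl).trans (hcomm (m b (m x y)) a))
    have f26 : m (m (m x a) y) b = m b (m y (m x a)) := ((congrArg₂ (fun p q => m p q) (hcomm (m x a) y) rfl).trans (hcomm (m y (m x a)) b))
    have f27 : m (m (m x a) b) y = m y (m b (m x a)) := ((congrArg₂ (fun p q => m p q) (hcomm (m x a) b) rfl).trans (hcomm (m b (m x a)) y))
    have f28 : m (m (m x b) y) a = m a (m y (m x b)) := ((congrArg₂ (fun p q => m p q) (hcomm (m x b) y) rfl).trans (hcomm (m y (m x b)) a))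
    have f29 : m (m (m x b) a) y = m y (m a (m x b)) := ((congrArg₂ (fun p q => m p q) (hcomm (m x b) a) rfl).trans (hcomm (m a (m x b)) y))
    have f30 : m (m (m y x) a) b = m b (m a (m x y)) := ((congrArg₂ (fun p q => m p q) ((congrArg₂ (fun p q => m p q) (hcomm y x) rfl).trans (hcomm (m x y) a)) rfl).trans (hcomm (m a (m x y)) b))
    have f31 : m (m (m y x) b) a = m a (m b (m x y)) := ((congrArg₂ (fun p q => m p q) ((congrArg₂ (fun p q => m p q) (hcomm y x) rfl).trans (hcomm (m x y) b)) rfl).trans (hcomm (m b (m x y)) a))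
    have f32 : m (m (m y a) x) b = m b (m x (m y a)) := ((congrArg₂ (fun p q => m p q) (hcomm (m y a) x) rfl).trans (hcomm (m x (m y a)) b))
    have f33 : m (m (m y a) b) x = m x (m b (m y a)) := ((congrArg₂ (fun p q => m p q) (hcomm (m y a) b) rfl).trans (hcomm (m b (m y a)) x))
    have f34 : m (m (m y b) x) a = m a (m x (m y b)) := ((congrArg₂ (fun p q => m p q) (hcomm (m y b) x) rfl).trans (hcomm (m x (m y b)) a))
    have f35 : m (m (m y b) a) x = m x (m a (m y b)) := ((congrArg₂ (fun p q => m p q) (hcomm (m y b) a) rfl).trans (hcomm (m a (m y b)) x))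
    linear_combination (norm := module) ((1:ℂ)/8) • lin3 x y a b - ((1:ℂ)/8) • lin3 y x a b +
      ((-1 : ℂ)/8) • f0 + ((-1 : ℂ)/8) • f1 + ((-1 : ℂ)/8) • f2 + ((-1 : ℂ)/8) • f3 + ((-1 : ℂ)/8) • f4 + ((-1 : ℂ)/8) • f5 + ((1 : ℂ)/8) • f6 + ((1 : ℂ)/8) • f7 + ((1 : ℂ)/8) • f8 + ((1 : ℂ)/8) • f9 + ((1 : ℂ)/8) • f10 + ((1 : ℂ)/8) • f11 + ((-5 : ℂ)/8) • f12 + ((3 : ℂ)/8) • f13 + ((3 : ℂ)/8) • f14 + ((3 : ℂ)/8) • f15 + ((3 : ℂ)/8) • f16 + ((3 : ℂ)/8) • f17 + ((5 : ℂ)/8) • f18 + ((-3 : ℂ)/8) • f19 + ((-3 : ℂ)/8) • f20 + ((-3 : ℂ)/8) • f21 + ((-3 : ℂ)/8) • f22 + ((-3 : ℂ)/8) • f23 + ((-1 : ℂ)/4) • f24 + ((-1 : ℂ)/4) • f25 + ((-1 : ℂ)/4) • f26 + ((-1 : ℂ)/4) • f27 + ((-1 : ℂ)/4) • f28 + ((-1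 : ℂ)/4) • f29 + ((1 : ℂ)/4) • f30 + ((1 : ℂ)/4) • f31 + ((1 : ℂ)/4) • f32 + ((1 : ℂ)/4) • f33 + ((1 : ℂ)/4) • f34 + ((1 : ℂ)/4) • f35
end

section
/- Every commutative algebra over ℂ satisfying the Jordan identity ((x·x)·y)·x = (x·x)·(y·x) for all x, y also satisfies the almost-Jordan identity 2·(((y·x)·x)·x) + y·((x·x)·x) = 3·((y·(x·x))·x) for all x, y. (Thus the variety of commutative CD-algebras, i.e. almost-Jordan algebras, contains all Jordan algebras.) -/
/-- Every commutative algebra over ℂ satisfying the Jordan identity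
`((x·x)·y)·x = (x·x)·(y·x)` also satisfies the almost-Jordan identity
`2·(((y·x)·x)·x) + y·((x·x)·x) = 3·((y·(x·x))·x)`. -/
theorem jordan_implies_almost_jordan
    {V : Type*} [AddCommGroup V] [Module ℂ V]
    (m : V →ₗ[ℂ] V →ₗ[ℂ] V) (hcomm : ∀ x y : V, m x y = m y x)
    (hJ : ∀ x y : V, m (m (m x x) y) x = m (m x x) (m y x)) :
    ∀ x y : V,
      (2 : ℂ) • m (m (m y x) x) x + m y (m (m x x) x) =
        (3 : ℂ) • m (m y (m x x)) x := by
  intro x y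
  -- linearization of the Jordan identity in x
  have hl : ∀ z w : V, (2:ℂ) • m (m (m x z) w) x + m (m (m x x) w) z
      = (2:ℂ) • m (m x z) (m w x) + m (m x x) (m w z) := by
    intro z w
    have h1 := hJ (x + z) w
    have h2 := hJ (x - z) w
    have h4 := hJ z w
    simp only [map_add, map_sub, LinearMap.add_apply, LinearMap.sub_apply] at h1 h2
    rw [hcomm z x] at h1 h2
    linear_combination (norm := module) ((2:ℂ)⁻¹) • h1 - ((2:ℂ)⁻¹) • h2 - h4
  have h := hl y x
  have hx := hJ x y
  rw [hcomm x y] at h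
  have c1 : m (m (m x x) x) y = m y (m (m x x) x) := hcomm _ _
  have c2 : m (m (m x x) y) x = m (m y (m x x)) x := by rw [hcomm y (m x x)]
  have c3 : m (m y x) (m x x) = m (m x x) (m y x) := hcomm _ _
  linear_combination (norm := module) h - c1 + (2:ℂ) • c3 + (3:ℂ) • c2 - (3:ℂ) • hx
end

section
/- For all α, β ∈ ℂ, the algebras 𝔠₂₆(α, β) and 𝔠₂₆(β, α) are isomorphic, where 𝔠₂₆(α, β) is the commutative algebra on ℂ⁵ with basis e₁,…,e₅ and nonzero basis products e₁e₁ = α e₅, e₁e₂ = e₃, e₂e₂ = β e₅, e₁e₃ = e₄ + e₅, e₂e₃ = e₄, e₃e₃ = e₅. -/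
/-- Structure constants of the algebra 𝔠₂₆(α, β) on ℂ⁵ (basis `e₁, …, e₅` indexed by
`Fin 5`). Nonzero products: e₁e₁ = α e₅, e₁e₂ = e₃, e₂e₂ = β e₅, e₁e₃ = e₄ + e₅,
e₂e₃ = e₄, e₃e₃ = e₅ (extended symmetrically). -/
noncomputable def tbl26 (α β : ℂ) : Fin 5 → Fin 5 → Fin 5 → ℂ :=
  ![![![0,0,0,0,α], ![0,0,1,0,0], ![0,0,0,1,1], 0, 0],
    ![![0,0,1,0,0], ![0,0,0,0,β], ![0,0,0,1,0], 0, 0],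
    ![![0,0,0,1,1], ![0,0,0,1,0], ![0,0,0,0,1], 0, 0],
    0,
    0]

/-- The bilinear multiplication of the algebra 𝔠₂₆(α, β) on ℂ⁵. -/
noncomputable def mul26 (α β : ℂ) (x y : Fin 5 → ℂ) : Fin 5 → ℂ :=
  fun k => ∑ i, ∑ j, x i * y j * tbl26 α β i j k

/-- The underlying map of the isomorphism: an involution. -/
noncomputable def phi26 : (Fin 5 → ℂ) → (Fin 5 → ℂ) :=
  fun x => ![-x 1, -x 0, x 2, -x 3, -x 3 + x 4]

lemma phi26_invol (x : Fin 5 → ℂ) : phi26 (phi26 x) = x := by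
  funext k
  fin_cases k <;> simp [phi26]

set_option maxHeartbeats 2000000 in
/-- For all α, β ∈ ℂ, the algebras 𝔠₂₆(α, β) and 𝔠₂₆(β, α) are isomorphic. -/
theorem c26_iso (α β : ℂ) :
    ∃ φ : (Fin 5 → ℂ) ≃ₗ[ℂ] (Fin 5 → ℂ),
      ∀ x y : Fin 5 → ℂ, φ (mul26 α β x y) = mul26 β α (φ x) (φ y) := by
  refine ⟨⟨⟨⟨phi26, ?_⟩, ?_⟩, phi26, phi26_invol, phi26_invol⟩, ?_⟩
  · intro x y
    funext k
    fin_cases k <;> simp [phi26] <;> ring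
  · intro c x
    funext k
    fin_cases k <;> simp [phi26] <;> ring
  · intro x y
    funext k
    fin_cases k <;>
      simp [phi26, mul26, tbl26, Fin.sum_univ_five, Matrix.vecHead, Matrix.vecTail] <;> ring
end

section
/- For every nonzero α ∈ ℂ, the algebras 𝔠₂₇(α) and 𝔠₂₇(1/α) are isomorphic, where 𝔠₂₇(α) is the commutative algebra on ℂ⁵ with basis e₁,…,e₅ and nonzero basis products e₁e₁ = α e₅, e₁e₂ = e₃, e₂e₂ = e₅, e₁e₃ = e₄, e₂e₃ = e₄, e₃e₃ = e₅. -/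
set_option maxHeartbeats 1000000

/-- Structure constants of the algebra 𝔠₂₇(α) on ℂ⁵ (basis `e₁, …, e₅` indexed by
`Fin 5`). Nonzero products: e₁e₁ = α e₅, e₁e₂ = e₃, e₂e₂ = e₅, e₁e₃ = e₄,
e₂e₃ = e₄, e₃e₃ = e₅ (extended symmetrically). -/
noncomputable def tbl27 (α : ℂ) : Fin 5 → Fin 5 → Fin 5 → ℂ :=
  ![![![0,0,0,0,α], ![0,0,1,0,0], ![0,0,0,1,0], 0, 0],
    ![![0,0,1,0,0], ![0,0,0,0,1], ![0,0,0,1,0], 0, 0],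
    ![![0,0,0,1,0], ![0,0,0,1,0], ![0,0,0,0,1], 0, 0],
    0,
    0]

/-- The bilinear multiplication of the algebra 𝔠₂₇(α) on ℂ⁵. -/
noncomputable def mul27 (α : ℂ) (x y : Fin 5 → ℂ) : Fin 5 → ℂ :=
  fun k => ∑ i, ∑ j, x i * y j * tbl27 α i j k

/-- Explicit formula for the multiplication of 𝔠₂₇(α). -/
lemma mul27_eq (α : ℂ) (x y : Fin 5 → ℂ) : mul27 α x y =
    ![0, 0, x 0 * y 1 + x 1 * y 0, x 0 * y 2 + x 2 * y 0 + x 1 * y 2 + x 2 * y 1,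
      α * (x 0 * y 0) + x 1 * y 1 + x 2 * y 2] := by
  funext k
  fin_cases k <;>
    simp [mul27, tbl27, Fin.sum_univ_five, Matrix.vecHead, Matrix.vecTail] <;> ring

/-- For every nonzero α ∈ ℂ, the algebras 𝔠₂₇(α) and 𝔠₂₇(1/α) are isomorphic. -/
theorem c27_iso (α : ℂ) (hα : α ≠ 0) :
    ∃ φ : (Fin 5 → ℂ) ≃ₗ[ℂ] (Fin 5 → ℂ),
      ∀ x y : Fin 5 → ℂ, φ (mul27 α x y) = mul27 (1 / α) (φ x) (φ y) := by
  set a : ℂ := α ^ ((2 : ℂ)⁻¹) with ha_def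
  have ha2 : a * a = α := by
    have h := Complex.cpow_nat_inv_pow α (n := 2) (by norm_num)
    push_cast at h
    rw [ha_def, ← sq]
    exact h
  have ha : a ≠ 0 := by
    intro h
    apply hα
    rw [← ha2, h, mul_zero]
  set F : (Fin 5 → ℂ) → (Fin 5 → ℂ) :=
    fun x => ![x 1 / a, x 0 / a, x 2 / α, x 3 / (a * α), x 4 / α ^ 2] with hF
  set G : (Fin 5 → ℂ) → (Fin 5 → ℂ) :=
    fun x => ![a * x 1, a * x 0, α * x 2, a * α * x 3, α ^ 2 * x 4] with hG
  have hFG : ∀ z : Fin 5 → ℂ, F (G z) = z := by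
    intro z
    funext k
    fin_cases k <;> simp [hF, hG] <;> field_simp
  have hGF : ∀ z : Fin 5 → ℂ, G (F z) = z := by
    intro z
    funext k
    fin_cases k <;> simp [hF, hG] <;> field_simp
  have key' : ∀ u v : Fin 5 → ℂ,
      G (mul27 (1 / α) u v) = mul27 α (G u) (G v) := by
    intro u v
    rw [mul27_eq, mul27_eq]
    funext k
    fin_cases k <;>
      simp [hG] <;>
      first
        | (field_simp <;> rw [← ha2] <;> ring)
        | (rw [← ha2]; ring)
  have key : ∀ x y : Fin 5 → ℂ, F (mul27 α x y) = mul27 (1 / α) (F x) (F y) := by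
    intro x y
    have := key' (F x) (F y)
    rw [hGF, hGF] at this
    rw [← this, hFG]
  exact ⟨⟨⟨⟨F, fun x y => by funext k; fin_cases k <;> simp [hF] <;> ring⟩,
      fun c x => by funext k; fin_cases k <;> simp [hF] <;> ring⟩,
      G, hGF, hFG⟩, key⟩
end

section
/- For every α ∈ ℂ and every ω ∈ ℂ with ω³ = 1, the algebras 𝔠₆₉(α) and 𝔠₆₉(ωα) are isomorphic, where 𝔠₆₉(α) is the commutative algebra on ℂ⁵ with basis e₁,…,e₅ and nonzero basis products e₁e₁ = e₄, e₁e₂ = α e₅, e₁e₃ = e₅, e₂e₂ = e₅, e₂e₃ = e₄, e₄e₄ = e₅. -/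
/-- Structure constants of the algebra 𝔠₆₉(α) on ℂ⁵ (basis `e₁, …, e₅` indexed by
`Fin 5`). Nonzero products: e₁e₁ = e₄, e₁e₂ = α e₅, e₁e₃ = e₅, e₂e₂ = e₅,
e₂e₃ = e₄, e₄e₄ = e₅ (extended symmetrically). -/
noncomputable def tbl69 (α : ℂ) : Fin 5 → Fin 5 → Fin 5 → ℂ :=
  ![![![0,0,0,1,0], ![0,0,0,0,α], ![0,0,0,0,1], 0, 0],
    ![![0,0,0,0,α], ![0,0,0,0,1], ![0,0,0,1,0], 0, 0],
    ![![0,0,0,0,1], ![0,0,0,1,0], 0, 0, 0],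
    ![0, 0, 0, ![0,0,0,0,1], 0],
    0]

/-- The bilinear multiplication of the algebra 𝔠₆₉(α) on ℂ⁵. -/
noncomputable def mul69 (α : ℂ) (x y : Fin 5 → ℂ) : Fin 5 → ℂ :=
  fun k => ∑ i, ∑ j, x i * y j * tbl69 α i j k

/-- For every α ∈ ℂ and every cube root of unity ω, the algebras 𝔠₆₉(α) and
𝔠₆₉(ωα) are isomorphic. -/
theorem c69_iso (α ω : ℂ) (hω : ω ^ 3 = 1) :
    ∃ φ : (Fin 5 → ℂ) ≃ₗ[ℂ] (Fin 5 → ℂ),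
      ∀ x y : Fin 5 → ℂ, φ (mul69 α x y) = mul69 (ω * α) (φ x) (φ y) := by
  have hω0 : ω ≠ 0 := by
    intro h; rw [h] at hω; simp at hω
  set c : Fin 5 → ℂ := ![ω, ω^2, 1, ω^2, ω] with hc
  have hcne : ∀ i, c i ≠ 0 := by
    intro i; fin_cases i <;> simp [hc, hω0]
  refine ⟨LinearEquiv.piCongrRight (fun i => LinearEquiv.smulOfNeZero ℂ ℂ (c i) (hcne i)), ?_⟩
  intro x y
  funext k
  have hφ : ∀ (z : Fin 5 → ℂ) (i : Fin 5),
      (LinearEquiv.piCongrRight (fun i => LinearEquiv.smulOfNeZero ℂ ℂ (c i) (hcne i))) z i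
        = c i * z i := by
    intro z i
    simp [LinearEquiv.smulOfNeZero, LinearEquiv.smulOfUnit,
      DistribMulAction.toLinearEquiv, Units.smul_def, smul_eq_mul]
  simp only [hφ, mul69]
  rw [Finset.mul_sum]
  fin_cases k <;>
    simp [Fin.sum_univ_five, tbl69, hc, Matrix.vecHead, Matrix.vecTail, Function.comp]
  · ring
  · linear_combination (-ω * (α * x 0 * y 1 + α * x 1 * y 0 + x 1 * y 1 + x 3 * y 3)) * hω
end

section
/- The algebra 𝔠₀₁ on ℂ⁵ with nonzero basis products e₁e₁ = e₂, e₂e₂ = e₃ is a nilpotent commutative algebra (A⁶ = 0) that satisfies the almost-Jordan identity 2·(((y·x)·x)·x) + y·((x·x)·x) = 3·((y·(x·x))·x) for all x, y, but does not satisfy the Jordan identity: there exist x, y with ((x·x)·y)·x ≠ (x·x)·(y·x). -/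
/-- `IsProdOf μ n z` says that `z` is a product of `n` elements under the
multiplication `μ`, with some arrangement of parentheses. -/
inductive IsProdOf {V : Type*} (μ : V → V → V) : ℕ → V → Prop
  | base (x : V) : IsProdOf μ 1 x
  | mul {m n : ℕ} {a b : V} :
      IsProdOf μ m a → IsProdOf μ n b → IsProdOf μ (m + n) (μ a b)

/-- Structure constants of the algebra 𝔠₀₁ (e₁e₁ = e₂, e₂e₂ = e₃) on ℂ⁵ (basis `e₁, …, e₅` indexed by `Fin 5`),
extended symmetrically; unlisted products of basis vectors are zero. -/
noncomputable def tbl01 : Fin 5 → Fin 5 → Fin 5 → ℂ :=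
  ![![![0,1,0,0,0], 0, 0, 0, 0],
    ![0, ![0,0,1,0,0], 0, 0, 0],
    0,
    0,
    0]

/-- The bilinear multiplication of the algebra on ℂ⁵. -/
noncomputable def mul01 (x y : Fin 5 → ℂ) : Fin 5 → ℂ :=
  fun k => ∑ i, ∑ j, x i * y j * tbl01 i j k

lemma mul01_0 (a b : Fin 5 → ℂ) : mul01 a b 0 = 0 := by
  simp [mul01, tbl01, Fin.sum_univ_five, Matrix.vecHead, Matrix.vecTail]
lemma mul01_1 (a b : Fin 5 → ℂ) : mul01 a b 1 = a 0 * b 0 := by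
  simp [mul01, tbl01, Fin.sum_univ_five, Matrix.vecHead, Matrix.vecTail]
lemma mul01_2 (a b : Fin 5 → ℂ) : mul01 a b 2 = a 1 * b 1 := by
  simp [mul01, tbl01, Fin.sum_univ_five, Matrix.vecHead, Matrix.vecTail]
lemma mul01_3 (a b : Fin 5 → ℂ) : mul01 a b 3 = 0 := by
  simp [mul01, tbl01, Fin.sum_univ_five, Matrix.vecHead, Matrix.vecTail]
lemma mul01_4 (a b : Fin 5 → ℂ) : mul01 a b 4 = 0 := by
  simp [mul01, tbl01, Fin.sum_univ_five, Matrix.vecHead, Matrix.vecTail]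

lemma mul01_eq_zero (a b : Fin 5 → ℂ) (h1 : a 0 * b 0 = 0) (h2 : a 1 * b 1 = 0) :
    mul01 a b = 0 := by
  funext k; fin_cases k
  · exact mul01_0 a b
  · exact (mul01_1 a b).trans h1
  · exact (mul01_2 a b).trans h2
  · exact mul01_3 a b
  · exact mul01_4 a b

lemma isProdOf_pos {n : ℕ} {z : Fin 5 → ℂ} (h : IsProdOf mul01 n z) : 1 ≤ n := by
  induction h with
  | base x => exact le_refl 1
  | mul _ _ ih1 ih2 => omega

lemma key {n : ℕ} {z : Fin 5 → ℂ} (h : IsProdOf mul01 n z) :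
    (2 ≤ n → z 0 = 0 ∧ z 3 = 0 ∧ z 4 = 0) ∧ (3 ≤ n → z 1 = 0) ∧ (5 ≤ n → z 2 = 0) := by
  induction h with
  | base x => exact ⟨fun h => by omega, fun h => by omega, fun h => by omega⟩
  | @mul m n a b ha hb iha ihb =>
    have hm := isProdOf_pos ha
    have hn := isProdOf_pos hb
    refine ⟨fun _ => ⟨mul01_0 a b, mul01_3 a b, mul01_4 a b⟩, fun hmn => ?_, fun hmn => ?_⟩
    · rw [mul01_1]
      rcases (by omega : 2 ≤ m ∨ 2 ≤ n) with h | h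
      · rw [(iha.1 h).1, zero_mul]
      · rw [(ihb.1 h).1, mul_zero]
    · rw [mul01_2]
      rcases (by omega : 3 ≤ m ∨ 3 ≤ n) with h | h
      · rw [iha.2.1 h, zero_mul]
      · rw [ihb.2.1 h, mul_zero]

/-- The algebra is nilpotent (A⁶ = 0), commutative, satisfies the almost-Jordan identity, but does not satisfy the Jordan identity. -/
theorem c01_properties :
    (∀ x y : Fin 5 → ℂ, mul01 x y = mul01 y x) ∧
    (∀ z : Fin 5 → ℂ, IsProdOf (mul01) 6 z → z = 0) ∧
    (∀ x y : Fin 5 → ℂ,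
        (2 : ℂ) • mul01 (mul01 (mul01 y x) x) x + mul01 y (mul01 (mul01 x x) x) =
          (3 : ℂ) • mul01 (mul01 y (mul01 x x)) x) ∧
    (∃ x y : Fin 5 → ℂ,
        mul01 (mul01 (mul01 x x) y) x ≠ mul01 (mul01 x x) (mul01 y x)) := by
  refine ⟨?_, ?_, ?_, ?_⟩
  · intro x y
    funext k; fin_cases k
    · exact (mul01_0 x y).trans (mul01_0 y x).symm
    · exact (mul01_1 x y).trans ((mul_comm (x 0) (y 0)).trans (mul01_1 y x).symm)
    · exact (mul01_2 x y).trans ((mul_comm (x 1) (y 1)).trans (mul01_2 y x).symm)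
    · exact (mul01_3 x y).trans (mul01_3 y x).symm
    · exact (mul01_4 x y).trans (mul01_4 y x).symm
  · intro z hz
    obtain ⟨h2, h3, h5⟩ := key hz
    obtain ⟨e0, e3, e4⟩ := h2 (by omega)
    funext k
    fin_cases k
    · exact e0
    · exact h3 (by omega)
    · exact h5 (by omega)
    · exact e3
    · exact e4
  · intro x y
    have t1 : mul01 (mul01 (mul01 y x) x) x = 0 :=
      mul01_eq_zero _ _ (by rw [mul01_0, zero_mul]) (by rw [mul01_1, mul01_0, zero_mul, zero_mul])
    have t2 : mul01 y (mul01 (mul01 x x) x) = 0 :=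
      mul01_eq_zero _ _ (by rw [mul01_0, mul_zero]) (by rw [mul01_1, mul01_0, zero_mul, mul_zero])
    have t3 : mul01 (mul01 y (mul01 x x)) x = 0 :=
      mul01_eq_zero _ _ (by rw [mul01_0, zero_mul]) (by rw [mul01_1, mul01_0, mul_zero, zero_mul])
    rw [t1, t2, t3]
    simp
  · refine ⟨![1,0,0,0,0], ![1,0,0,0,0], fun h => ?_⟩
    have h2 := congrFun h 2
    rw [mul01_2, mul01_2, mul01_1, mul01_1] at h2
    simp [Matrix.cons_val_zero, Matrix.cons_val_one] at h2
end

section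
/- The algebra 𝔠₇₆ on ℂ⁵ with nonzero basis products e₁e₁ = e₂, e₁e₂ = e₄, e₁e₄ = e₅, e₂e₂ = −2e₅, e₃e₃ = e₄ + 3e₅ is a nilpotent commutative algebra (A⁶ = 0) that satisfies the almost-Jordan identity 2·(((y·x)·x)·x) + y·((x·x)·x) = 3·((y·(x·x))·x) for all x, y, but does not satisfy the Jordan identity: there exist x, y with ((x·x)·y)·x ≠ (x·x)·(y·x). -/
/-- Structure constants of the algebra 𝔠₇₆ (e₁e₁ = e₂, e₁e₂ = e₄, e₁e₄ = e₅, e₂e₂ = −2e₅, e₃e₃ = e₄ + 3e₅) on ℂ⁵ (basis `e₁, …, e₅` indexed by `Fin 5`),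
extended symmetrically; unlisted products of basis vectors are zero. -/
noncomputable def tbl76 : Fin 5 → Fin 5 → Fin 5 → ℂ :=
  ![![![0,1,0,0,0], ![0,0,0,1,0], 0, ![0,0,0,0,1], 0],
    ![![0,0,0,1,0], ![0,0,0,0,-2], 0, 0, 0],
    ![0, 0, ![0,0,0,1,3], 0, 0],
    ![![0,0,0,0,1], 0, 0, 0, 0],
    0]

/-- The bilinear multiplication of the algebra on ℂ⁵. -/
noncomputable def mul76 (x y : Fin 5 → ℂ) : Fin 5 → ℂ :=
  fun k => ∑ i, ∑ j, x i * y j * tbl76 i j k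

lemma mul76_0 (x y : Fin 5 → ℂ) : mul76 x y 0 = 0 := by
  simp [mul76, tbl76, Fin.sum_univ_five, Matrix.vecHead, Matrix.vecTail]

lemma mul76_1 (x y : Fin 5 → ℂ) : mul76 x y 1 = x 0 * y 0 := by
  simp [mul76, tbl76, Fin.sum_univ_five, Matrix.vecHead, Matrix.vecTail]

lemma mul76_2 (x y : Fin 5 → ℂ) : mul76 x y 2 = 0 := by
  simp [mul76, tbl76, Fin.sum_univ_five, Matrix.vecHead, Matrix.vecTail]

lemma mul76_3 (x y : Fin 5 → ℂ) :
    mul76 x y 3 = x 0 * y 1 + x 1 * y 0 + x 2 * y 2 := by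
  simp [mul76, tbl76, Fin.sum_univ_five, Matrix.vecHead, Matrix.vecTail]

lemma mul76_4 (x y : Fin 5 → ℂ) :
    mul76 x y 4 = x 0 * y 3 + x 3 * y 0 - 2 * (x 1 * y 1) + 3 * (x 2 * y 2) := by
  simp [mul76, tbl76, Fin.sum_univ_five, Matrix.vecHead, Matrix.vecTail]; ring

lemma fmk0 (h : 0 < 5) : (⟨0, h⟩ : Fin 5) = 0 := rfl
lemma fmk1 (h : 1 < 5) : (⟨1, h⟩ : Fin 5) = 1 := rfl
lemma fmk2 (h : 2 < 5) : (⟨2, h⟩ : Fin 5) = 2 := rfl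
lemma fmk3 (h : 3 < 5) : (⟨3, h⟩ : Fin 5) = 3 := rfl
lemma fmk4 (h : 4 < 5) : (⟨4, h⟩ : Fin 5) = 4 := rfl

def wt76 : Fin 5 → ℕ := ![1, 2, 1, 3, 4]

lemma tbl76_wt {i j k : Fin 5} (h : wt76 k < wt76 i + wt76 j) : tbl76 i j k = 0 := by
  fin_cases i <;> fin_cases j <;> fin_cases k <;>
    simp_all [tbl76, wt76, Matrix.vecHead, Matrix.vecTail, Function.comp]

lemma prod_wt {n : ℕ} {z : Fin 5 → ℂ} (h : IsProdOf mul76 n z) :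
    ∀ k, wt76 k < n → z k = 0 := by
  induction h with
  | base x =>
    intro k hk
    exact absurd hk (by fin_cases k <;> simp [wt76])
  | mul ha hb iha ihb =>
    intro k hk
    rename_i m n a b
    unfold mul76
    refine Finset.sum_eq_zero fun i _ => Finset.sum_eq_zero fun j _ => ?_
    by_cases hi : wt76 i < m
    · rw [iha i hi]; ring
    · by_cases hj : wt76 j < n
      · rw [ihb j hj]; ring
      · rw [tbl76_wt (by omega)]; ring

/-- The algebra is nilpotent (A⁶ = 0), commutative, satisfies the almost-Jordan identity, but does not satisfy the Jordan identity. -/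
theorem c76_properties :
    (∀ x y : Fin 5 → ℂ, mul76 x y = mul76 y x) ∧
    (∀ z : Fin 5 → ℂ, IsProdOf (mul76) 6 z → z = 0) ∧
    (∀ x y : Fin 5 → ℂ,
        (2 : ℂ) • mul76 (mul76 (mul76 y x) x) x + mul76 y (mul76 (mul76 x x) x) =
          (3 : ℂ) • mul76 (mul76 y (mul76 x x)) x) ∧
    (∃ x y : Fin 5 → ℂ,
        mul76 (mul76 (mul76 x x) y) x ≠ mul76 (mul76 x x) (mul76 y x)) := by
  refine ⟨?_, ?_, ?_, ?_⟩
  · intro x y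
    funext k
    fin_cases k <;>
      simp only [fmk0, fmk1, fmk2, fmk3, fmk4, mul76_0, mul76_1, mul76_2, mul76_3, mul76_4] <;> ring
  · intro z hz
    funext k
    have := prod_wt hz k
    fin_cases k <;> exact this (by norm_num [wt76])
  · intro x y
    funext k
    fin_cases k <;>
      simp only [fmk0, fmk1, fmk2, fmk3, fmk4, Pi.add_apply, Pi.smul_apply, smul_eq_mul,
        mul76_0, mul76_1, mul76_2, mul76_3, mul76_4] <;> ring
  · refine ⟨![1,0,1,0,0], ![1,0,0,0,0], fun h => ?_⟩
    have := congrFun h 4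
    simp only [fmk0, fmk1, fmk2, fmk3, fmk4, mul76_0, mul76_1, mul76_2, mul76_3, mul76_4] at this
    norm_num [Matrix.vecHead, Matrix.vecTail] at this
end

section
/- The algebra 𝔠₇₇ on ℂ⁵ with nonzero basis products e₁e₁ = e₂, e₁e₂ = e₄, e₁e₄ = e₅, e₂e₃ = e₅, e₃e₃ = e₄ is a nilpotent commutative algebra (A⁶ = 0) that satisfies the almost-Jordan identity 2·(((y·x)·x)·x) + y·((x·x)·x) = 3·((y·(x·x))·x) for all x, y, but does not satisfy the Jordan identity: there exist x, y with ((x·x)·y)·x ≠ (x·x)·(y·x). -/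
/-- Structure constants of the algebra 𝔠₇₇ (e₁e₁ = e₂, e₁e₂ = e₄, e₁e₄ = e₅, e₂e₃ = e₅, e₃e₃ = e₄) on ℂ⁵ (basis `e₁, …, e₅` indexed by `Fin 5`),
extended symmetrically; unlisted products of basis vectors are zero. -/
noncomputable def tbl77 : Fin 5 → Fin 5 → Fin 5 → ℂ :=
  ![![![0,1,0,0,0], ![0,0,0,1,0], 0, ![0,0,0,0,1], 0],
    ![![0,0,0,1,0], 0, ![0,0,0,0,1], 0, 0],
    ![0, ![0,0,0,0,1], ![0,0,0,1,0], 0, 0],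
    ![![0,0,0,0,1], 0, 0, 0, 0],
    0]

/-- The bilinear multiplication of the algebra on ℂ⁵. -/
noncomputable def mul77 (x y : Fin 5 → ℂ) : Fin 5 → ℂ :=
  fun k => ∑ i, ∑ j, x i * y j * tbl77 i j k

lemma mul77_eq (x y : Fin 5 → ℂ) :
    mul77 x y = ![0, x 0 * y 0, 0, x 0 * y 1 + x 1 * y 0 + x 2 * y 2,
      x 0 * y 3 + x 3 * y 0 + x 1 * y 2 + x 2 * y 1] := by
  funext k
  fin_cases k <;>
    simp [mul77, tbl77, Fin.sum_univ_five, Matrix.vecHead, Matrix.vecTail] <;> ring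

lemma key77 {n : ℕ} {z : Fin 5 → ℂ} (h : IsProdOf mul77 n z) :
    1 ≤ n ∧ (2 ≤ n → z 0 = 0 ∧ z 2 = 0) ∧ (3 ≤ n → z 1 = 0) ∧
      (4 ≤ n → z 3 = 0) ∧ (5 ≤ n → z 4 = 0) := by
  induction h with
  | base x => exact ⟨le_refl 1, by omega, by omega, by omega, by omega⟩
  | @mul m n a b ha hb iha ihb =>
    obtain ⟨hm1, ha2, ha3, ha4, ha5⟩ := iha
    obtain ⟨hn1, hb2, hb3, hb4, hb5⟩ := ihb
    rw [mul77_eq]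
    refine ⟨by omega, fun _ => ⟨rfl, rfl⟩, ?_, ?_, ?_⟩
    · intro h
      show a 0 * b 0 = 0
      rcases (show 2 ≤ m ∨ 2 ≤ n by omega) with hc | hc
      · rw [(ha2 hc).1, zero_mul]
      · rw [(hb2 hc).1, mul_zero]
    · intro h
      show a 0 * b 1 + a 1 * b 0 + a 2 * b 2 = 0
      rcases (show (2 ≤ m ∧ 2 ≤ n) ∨ (m = 1 ∧ 3 ≤ n) ∨ (n = 1 ∧ 3 ≤ m) by omega)
        with ⟨hc, hd⟩ | ⟨hc, hd⟩ | ⟨hc, hd⟩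
      · rw [(ha2 hc).1, (hb2 hd).1, (ha2 hc).2]; ring
      · rw [hb3 hd, (hb2 (by omega)).1, (hb2 (by omega)).2]; ring
      · rw [ha3 hd, (ha2 (by omega)).1, (ha2 (by omega)).2]; ring
    · intro h
      show a 0 * b 3 + a 3 * b 0 + a 1 * b 2 + a 2 * b 1 = 0
      rcases (show (2 ≤ m ∧ 3 ≤ n) ∨ (3 ≤ m ∧ 2 ≤ n) ∨ (m = 1 ∧ 4 ≤ n) ∨ (n = 1 ∧ 4 ≤ m) by omega)
        with ⟨hc, hd⟩ | ⟨hc, hd⟩ | ⟨hc, hd⟩ | ⟨hc, hd⟩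
      · rw [(ha2 hc).1, (ha2 hc).2, (hb2 (by omega)).1, (hb2 (by omega)).2]; ring
      · rw [(hb2 hd).1, (hb2 hd).2, (ha2 (by omega)).1, (ha2 (by omega)).2]; ring
      · rw [hb4 hd, (hb2 (by omega)).1, (hb2 (by omega)).2, hb3 (by omega)]; ring
      · rw [ha4 hd, (ha2 (by omega)).1, (ha2 (by omega)).2, ha3 (by omega)]; ring

/-- The algebra is nilpotent (A⁶ = 0), commutative, satisfies the almost-Jordan identity, but does not satisfy the Jordan identity. -/
theorem c77_properties :
    (∀ x y : Fin 5 → ℂ, mul77 x y = mul77 y x) ∧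
    (∀ z : Fin 5 → ℂ, IsProdOf (mul77) 6 z → z = 0) ∧
    (∀ x y : Fin 5 → ℂ,
        (2 : ℂ) • mul77 (mul77 (mul77 y x) x) x + mul77 y (mul77 (mul77 x x) x) =
          (3 : ℂ) • mul77 (mul77 y (mul77 x x)) x) ∧
    (∃ x y : Fin 5 → ℂ,
        mul77 (mul77 (mul77 x x) y) x ≠ mul77 (mul77 x x) (mul77 y x)) := by
  refine ⟨?_, ?_, ?_, ?_⟩
  · intro x y
    rw [mul77_eq, mul77_eq]
    funext k; fin_cases k <;> simp <;> ring
  · intro z hz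
    obtain ⟨-, h2, h3, h4, h5⟩ := key77 hz
    funext k
    fin_cases k
    · exact (h2 (by omega)).1
    · exact h3 (by omega)
    · exact (h2 (by omega)).2
    · exact h4 (by omega)
    · exact h5 (by omega)
  · intro x y
    simp only [mul77_eq]
    funext k
    fin_cases k <;> simp <;> ring
  · refine ⟨![1,0,0,0,0], ![1,0,0,0,0], fun h => ?_⟩
    have := congrFun h 4
    simp [mul77_eq] at this
end

section
/- For every α ∈ ℂ, the algebra 𝔠₄₉(α) on ℂ⁵ with nonzero basis products e₁e₁ = e₃, e₁e₂ = e₅, e₂e₂ = e₄, e₃e₃ = α e₅, e₃e₄ = e₅, e₄e₄ = e₅ is a nilpotent commutative algebra (A⁶ = 0) that satisfies the almost-Jordan identity 2·(((y·x)·x)·x) + y·((x·x)·x) = 3·((y·(x·x))·x) for all x, y, but does not satisfy the Jordan identity: there exist x, y with ((x·x)·y)·x ≠ (x·x)·(y·x). -/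
/-- Structure constants of the algebra 𝔠₄₉(α) (e₁e₁ = e₃, e₁e₂ = e₅, e₂e₂ = e₄, e₃e₃ = α e₅, e₃e₄ = e₅, e₄e₄ = e₅) on ℂ⁵ (basis `e₁, …, e₅` indexed by `Fin 5`),
extended symmetrically; unlisted products of basis vectors are zero. -/
noncomputable def tbl49 (α : ℂ) : Fin 5 → Fin 5 → Fin 5 → ℂ :=
  ![![![0,0,1,0,0], ![0,0,0,0,1], 0, 0, 0],
    ![![0,0,0,0,1], ![0,0,0,1,0], 0, 0, 0],
    ![0, 0, ![0,0,0,0,α], ![0,0,0,0,1], 0],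
    ![0, 0, ![0,0,0,0,1], ![0,0,0,0,1], 0],
    0]

/-- The bilinear multiplication of the algebra on ℂ⁵. -/
noncomputable def mul49 (α : ℂ) (x y : Fin 5 → ℂ) : Fin 5 → ℂ :=
  fun k => ∑ i, ∑ j, x i * y j * tbl49 α i j k

/-- Explicit formula for the multiplication. -/
lemma mul49_eq (α : ℂ) (x y : Fin 5 → ℂ) :
    mul49 α x y = ![0, 0, x 0 * y 0, x 1 * y 1,
      x 0 * y 1 + x 1 * y 0 + α * (x 2 * y 2) + x 2 * y 3 + x 3 * y 2 + x 3 * y 3] := by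
  funext k
  fin_cases k <;>
    · simp [mul49, tbl49, Fin.sum_univ_five, Matrix.vecHead, Matrix.vecTail]
      try ring

/-- Product with an element of span(e₅) is zero. -/
lemma mul49_right_U (α : ℂ) (x y : Fin 5 → ℂ)
    (h0 : y 0 = 0) (h1 : y 1 = 0) (h2 : y 2 = 0) (h3 : y 3 = 0) :
    mul49 α x y = 0 := by
  funext k
  rw [mul49_eq]
  fin_cases k <;> simp [h0, h1, h2, h3]

lemma mul49_comm (α : ℂ) (x y : Fin 5 → ℂ) : mul49 α x y = mul49 α y x := by
  rw [mul49_eq, mul49_eq]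
  funext k
  fin_cases k <;>
    · simp
      try ring

lemma IsProdOf.one_le {V : Type*} {μ : V → V → V} {n : ℕ} {z : V}
    (h : IsProdOf μ n z) : 1 ≤ n := by
  induction h with
  | base => omega
  | mul _ _ ih1 ih2 => omega

/-- Any product of ≥ 3 elements lies in span(e₅). -/
lemma prodU (α : ℂ) {n : ℕ} {z : Fin 5 → ℂ} (h : IsProdOf (mul49 α) n z) (hn : 3 ≤ n) :
    z 0 = 0 ∧ z 1 = 0 ∧ z 2 = 0 ∧ z 3 = 0 := by
  induction h with
  | base x => omega
  | @mul m k a b ha hb iha ihb =>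
    -- any product of ≥ 2 elements has coordinates 0,1 zero
    have W : ∀ {p : ℕ} {c : Fin 5 → ℂ}, IsProdOf (mul49 α) p c → 2 ≤ p →
        c 0 = 0 ∧ c 1 = 0 := by
      intro p c hc hp
      cases hc with
      | base x => omega
      | mul hu hv => rw [mul49_eq]; exact ⟨rfl, rfl⟩
    rw [mul49_eq]
    by_cases hm : 2 ≤ m
    · obtain ⟨e0, e1⟩ := W ha hm
      exact ⟨rfl, rfl, by simp [e0], by simp [e1]⟩
    · have hk : 2 ≤ k := by have := ha.one_le; have := hb.one_le; omega
      obtain ⟨e0, e1⟩ := W hb hk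
      exact ⟨rfl, rfl, by simp [e0], by simp [e1]⟩

/-- Any product of ≥ 5 elements vanishes. -/
lemma prod_five (α : ℂ) {n : ℕ} {z : Fin 5 → ℂ} (h : IsProdOf (mul49 α) n z) (hn : 5 ≤ n) :
    z = 0 := by
  cases h with
  | base x => omega
  | @mul m k a b ha hb =>
    by_cases hm : 3 ≤ m
    · obtain ⟨e0, e1, e2, e3⟩ := prodU α ha hm
      rw [mul49_comm]
      exact mul49_right_U α b a e0 e1 e2 e3
    · have hk : 3 ≤ k := by omega
      obtain ⟨e0, e1, e2, e3⟩ := prodU α hb hk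
      exact mul49_right_U α a b e0 e1 e2 e3

set_option maxHeartbeats 1000000 in
/-- The algebra is nilpotent (A⁶ = 0), commutative, satisfies the almost-Jordan identity, but does not satisfy the Jordan identity. -/
theorem c49_properties (α : ℂ) :
    (∀ x y : Fin 5 → ℂ, mul49 α x y = mul49 α y x) ∧
    (∀ z : Fin 5 → ℂ, IsProdOf (mul49 α) 6 z → z = 0) ∧
    (∀ x y : Fin 5 → ℂ,
        (2 : ℂ) • mul49 α (mul49 α (mul49 α y x) x) x + mul49 α y (mul49 α (mul49 α x x) x) =
          (3 : ℂ) • mul49 α (mul49 α y (mul49 α x x)) x) ∧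
    (∃ x y : Fin 5 → ℂ,
        mul49 α (mul49 α (mul49 α x x) y) x ≠ mul49 α (mul49 α x x) (mul49 α y x)) := by
  refine ⟨mul49_comm α, fun z hz => prod_five α hz (by omega), ?_, ?_⟩
  · intro x y
    funext k
    fin_cases k <;>
      · simp [mul49_eq]
        try ring
  · refine ⟨![1,1,0,0,0], ![0,1,0,0,0], ?_⟩
    intro h
    have h4 := congrFun h 4
    simp [mul49_eq] at h4
    norm_num at h4
end

section
/- The algebra 𝒥₂₁ on ℂ⁵ with nonzero basis products e₁e₁ = e₅, e₁e₂ = e₄, e₂e₂ = e₅, e₃e₃ = e₄, e₃e₄ = e₅ is a nilpotent commutative algebra (A⁶ = 0) that satisfies the Jordan identity ((x·x)·y)·x = (x·x)·(y·x) for all x, y. -/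
/-- Structure constants of the algebra 𝒥₂₁ (e₁e₁ = e₅, e₁e₂ = e₄, e₂e₂ = e₅, e₃e₃ = e₄, e₃e₄ = e₅) on ℂ⁵ (basis `e₁, …, e₅` indexed by `Fin 5`),
extended symmetrically; unlisted products of basis vectors are zero. -/
noncomputable def tblJ21 : Fin 5 → Fin 5 → Fin 5 → ℂ :=
  ![![![0,0,0,0,1], ![0,0,0,1,0], 0, 0, 0],
    ![![0,0,0,1,0], ![0,0,0,0,1], 0, 0, 0],
    ![0, 0, ![0,0,0,1,0], ![0,0,0,0,1], 0],
    ![0, 0, ![0,0,0,0,1], 0, 0],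
    0]

/-- The bilinear multiplication of the algebra on ℂ⁵. -/
noncomputable def mulJ21 (x y : Fin 5 → ℂ) : Fin 5 → ℂ :=
  fun k => ∑ i, ∑ j, x i * y j * tblJ21 i j k

/-- Explicit formula for the multiplication. -/
lemma mulJ21_eq (x y : Fin 5 → ℂ) :
    mulJ21 x y = ![0, 0, 0, x 0 * y 1 + x 1 * y 0 + x 2 * y 2,
      x 0 * y 0 + x 1 * y 1 + x 2 * y 3 + x 3 * y 2] := by
  funext k
  fin_cases k <;>
    simp [mulJ21, Fin.sum_univ_five, tblJ21, Matrix.vecHead, Matrix.vecTail] <;> ring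

/-- Key nilpotency lemma: products of ≥2 factors lie in span{e₄,e₅}, of ≥3 in
span{e₅}, of ≥4 are zero. -/
lemma J21_key : ∀ {n : ℕ} {z : Fin 5 → ℂ}, IsProdOf mulJ21 n z →
    1 ≤ n ∧ (2 ≤ n → z 0 = 0 ∧ z 1 = 0 ∧ z 2 = 0) ∧ (3 ≤ n → z 3 = 0) ∧
    (4 ≤ n → z = 0) := by
  intro n z h
  induction h with
  | base x => exact ⟨le_refl 1, fun h => absurd h (by omega), fun h => absurd h (by omega),
      fun h => absurd h (by omega)⟩
  | @mul m n a b ha hb iha ihb =>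
    obtain ⟨hm1, ha2, ha3, ha4⟩ := iha
    obtain ⟨hn1, hb2, hb3, hb4⟩ := ihb
    refine ⟨by omega, fun _ => ?_, fun h3 => ?_, fun h4 => ?_⟩
    · rw [mulJ21_eq]; exact ⟨rfl, rfl, rfl⟩
    · -- one of the factors has ≥ 2 factors
      rw [mulJ21_eq]
      rcases le_or_gt 2 m with hm | hm
      · obtain ⟨h0, h1, h2⟩ := ha2 hm
        simp [h0, h1, h2]
      · have hn : 2 ≤ n := by omega
        obtain ⟨h0, h1, h2⟩ := hb2 hn
        simp [h0, h1, h2]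
    · -- either one factor has ≥3 factors, or both have ≥2
      rw [mulJ21_eq]
      rcases le_or_gt 3 m with hm | hm
      · obtain ⟨h0, h1, h2⟩ := ha2 (by omega)
        have h3 := ha3 hm
        funext k; fin_cases k <;> simp [h0, h1, h2, h3]
      · rcases le_or_gt 3 n with hn | hn
        · obtain ⟨h0, h1, h2⟩ := hb2 (by omega)
          have h3 := hb3 hn
          funext k; fin_cases k <;> simp [h0, h1, h2, h3]
        · have hm2 : 2 ≤ m := by omega
          have hn2 : 2 ≤ n := by omega
          obtain ⟨a0, a1, a2⟩ := ha2 hm2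
          obtain ⟨b0, b1, b2⟩ := hb2 hn2
          funext k; fin_cases k <;> simp [a0, a1, a2, b0, b1, b2]

/-- The algebra 𝒥₂₁ is a nilpotent (A⁶ = 0) commutative algebra satisfying the Jordan identity. -/
theorem J21_properties :
    (∀ x y : Fin 5 → ℂ, mulJ21 x y = mulJ21 y x) ∧
    (∀ z : Fin 5 → ℂ, IsProdOf (mulJ21) 6 z → z = 0) ∧
    (∀ x y : Fin 5 → ℂ,
        mulJ21 (mulJ21 (mulJ21 x x) y) x = mulJ21 (mulJ21 x x) (mulJ21 y x)) := by
  refine ⟨fun x y => ?_, fun z h => (J21_key h).2.2.2 (by omega), fun x y => ?_⟩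
  · rw [mulJ21_eq, mulJ21_eq]
    funext k; fin_cases k <;> simp <;> ring
  · simp only [mulJ21_eq]
    funext k; fin_cases k <;> simp [Matrix.vecHead, Matrix.vecTail] <;> ring
end
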